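/- arXiv:1008.1573 — 2 statements merged into one kernel-verified Lean document; each statement's English description precedes it below -/
import Mathlib

section
/- Let p be an odd prime and x ∈ ZMod p with x ≠ 0. Then ∑_{n=1}^{p-1} T_n(x) · ((-4)⁻¹)^n = (x³ - 3x² + 6x - 6)/x³ in ZMod p, where T_n(x) denotes the n-th Touchard polynomial evaluated at x (reduced mod p). -/
open Polynomial

/-- The Touchard polynomials in `ℤ[X]`, determined by `touchard 0 = 1` and
`touchard (n+1) = X * ∑_{k=0}^{n} C(n,k) * touchard k`. -/
noncomputable def touchard : ℕ → ℤ[X]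
  | 0 => 1
  | n + 1 => X * ∑ k ∈ (Finset.range (n + 1)).attach, (n.choose k : ℤ[X]) * touchard k
decreasing_by exact Finset.mem_range.mp k.2

open Finset

/-- triangle sum reindexing -/
theorem tri_sum {M : Type*} [AddCommMonoid M] (N : ℕ) (g : ℕ → ℕ → M) :
    ∑ j ∈ range N, ∑ i ∈ range (N - j), g j i
      = ∑ k ∈ range N, ∑ j ∈ range (k + 1), g j (k - j) := by
  induction N with
  | zero => simp
  | succ N ih =>
    rw [Finset.sum_range_succ, Finset.sum_range_succ]
    have h1 : ∀ j ∈ range N, ∑ i ∈ range (N + 1 - j), g j i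
        = (∑ i ∈ range (N - j), g j i) + g j (N - j) := by
      intro j hj
      rw [mem_range] at hj
      rw [show N + 1 - j = (N - j) + 1 by omega, Finset.sum_range_succ]
    rw [Finset.sum_congr rfl h1, Finset.sum_add_distrib, ih, Finset.sum_range_succ]
    simp [add_assoc]

/-- the Dobinski-style weights -/
def cc (p : ℕ) (x : ZMod p) (j : ℕ) : ZMod p :=
  x ^ j * ((Nat.factorial j : ZMod p))⁻¹
    * ∑ i ∈ range (p - j), (-x) ^ i * ((Nat.factorial i : ZMod p))⁻¹

section
variable {p : ℕ} [hp : Fact p.Prime]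

theorem fact_ne_zero {j : ℕ} (hj : j < p) : ((Nat.factorial j : ZMod p)) ≠ 0 := by
  intro h0
  rw [ZMod.natCast_eq_zero_iff] at h0
  have := (Nat.Prime.dvd_factorial hp.out).mp h0
  omega

theorem cast_ne_zero' {j : ℕ} (h0 : 0 < j) (hj : j < p) : ((j : ZMod p)) ≠ 0 := by
  intro h
  rw [ZMod.natCast_eq_zero_iff] at h
  have := Nat.le_of_dvd h0 h
  omega

theorem inv_fact_mul {j k : ℕ} (hjk : j ≤ k) (hk : k < p) :
    ((Nat.factorial j : ZMod p))⁻¹ * ((Nat.factorial (k - j) : ZMod p))⁻¹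
      = (k.choose j : ZMod p) * ((Nat.factorial k : ZMod p))⁻¹ := by
  have h := Nat.choose_mul_factorial_mul_factorial hjk
  have hc : (k.choose j : ZMod p) * (Nat.factorial j : ZMod p) * (Nat.factorial (k - j) : ZMod p)
      = (Nat.factorial k : ZMod p) := by exact_mod_cast congrArg (Nat.cast : ℕ → ZMod p) h
  have h1 := fact_ne_zero (p := p) (lt_of_le_of_lt hjk hk)
  have h2 := fact_ne_zero (p := p) (show k - j < p by omega)
  have h3 := fact_ne_zero (p := p) hk
  field_simp
  linear_combination -hc

theorem sum_cc (x : ZMod p) : ∑ j ∈ range p, cc p x j = 1 := by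
  unfold cc
  have h1 : ∀ j ∈ range p, x ^ j * ((Nat.factorial j : ZMod p))⁻¹
      * ∑ i ∈ range (p - j), (-x) ^ i * ((Nat.factorial i : ZMod p))⁻¹
      = ∑ i ∈ range (p - j), (x ^ j * ((Nat.factorial j : ZMod p))⁻¹)
          * ((-x) ^ i * ((Nat.factorial i : ZMod p))⁻¹) := fun j _ => Finset.mul_sum _ _ _
  rw [Finset.sum_congr rfl h1,
    tri_sum p (fun j i => (x ^ j * ((Nat.factorial j : ZMod p))⁻¹)
      * ((-x) ^ i * ((Nat.factorial i : ZMod p))⁻¹))]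
  have h2 : ∀ k ∈ range p, ∑ j ∈ range (k + 1),
      (x ^ j * ((Nat.factorial j : ZMod p))⁻¹)
        * ((-x) ^ (k - j) * ((Nat.factorial (k - j) : ZMod p))⁻¹)
      = ((Nat.factorial k : ZMod p))⁻¹ * (x + (-x)) ^ k := by
    intro k hk
    rw [mem_range] at hk
    rw [add_pow, Finset.mul_sum]
    apply Finset.sum_congr rfl
    intro j hj
    rw [mem_range] at hj
    have := inv_fact_mul (p := p) (show j ≤ k by omega) hk
    calc x ^ j * (↑(Nat.factorial j))⁻¹ * ((-x) ^ (k - j) * (↑(Nat.factorial (k - j)))⁻¹)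
        = x ^ j * (-x) ^ (k - j) * ((↑(Nat.factorial j))⁻¹ * (↑(Nat.factorial (k - j)))⁻¹) := by
          ring
      _ = x ^ j * (-x) ^ (k - j) * ((k.choose j : ZMod p) * (↑(Nat.factorial k))⁻¹) := by rw [this]
      _ = (↑(Nat.factorial k))⁻¹ * (x ^ j * (-x) ^ (k - j) * ↑(k.choose j)) := by ring
  rw [Finset.sum_congr rfl h2]
  have h3 : ∀ k ∈ range p, ((Nat.factorial k : ZMod p))⁻¹ * (x + (-x)) ^ k
      = if k = 0 then 1 else 0 := by
    intro k hk
    rcases Nat.eq_zero_or_pos k with h | h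
    · simp [h]
    · have hk0 : k ≠ 0 := by omega
      simp [add_neg_cancel, zero_pow hk0, hk0]
  rw [Finset.sum_congr rfl h3, Finset.sum_ite_eq' (range p) 0 (fun _ => (1 : ZMod p))]
  simp [hp.out.pos]

theorem choose_p1 (j : ℕ) (hj : j ≤ p - 1) :
    (((p - 1).choose j : ℕ) : ZMod p) = (-1) ^ j := by
  induction j with
  | zero => simp
  | succ j ih =>
    have hp2 := hp.out.two_le
    have hj' : j ≤ p - 1 := by omega
    have h := Nat.choose_succ_right_eq (p - 1) j
    have hcast : ((p - 1).choose (j + 1) : ZMod p) * ((j : ZMod p) + 1)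
        = ((p - 1).choose j : ZMod p) * ((p - 1 - j : ℕ) : ZMod p) := by
      exact_mod_cast congrArg (Nat.cast : ℕ → ZMod p) h
    have hp1 : ((p - 1 - j : ℕ) : ZMod p) = -((j : ZMod p) + 1) := by
      have h1 : (p : ℕ) - 1 - j + (j + 1) = p := by omega
      have h2 := congrArg (Nat.cast : ℕ → ZMod p) h1
      push_cast at h2
      rw [ZMod.natCast_self] at h2
      linear_combination h2
    have hne : ((j : ZMod p) + 1) ≠ 0 := by
      have : (((j + 1 : ℕ)) : ZMod p) ≠ 0 := cast_ne_zero' (by omega) (by omega)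
      push_cast at this
      exact this
    apply mul_right_cancel₀ hne
    rw [hcast, ih hj', hp1]
    ring

/-- the key shift relation for the weights -/
theorem key_cc (hp2 : p ≠ 2) (x : ZMod p) (hx : x ≠ 0) {j : ℕ} (hj : j < p) :
    x * cc p x j = (((j + 1 : ℕ)) : ZMod p) * cc p x (j + 1) - x := by
  have hple := hp.out.two_le
  rcases eq_or_lt_of_le (Nat.succ_le_of_lt hj) with hj1 | hj1
  · -- j + 1 = p
    have hjp : j = p - 1 := by omega
    subst hjp
    rw [show (p - 1) + 1 = p by omega]
    have h1 : cc p x p = 0 := by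
      unfold cc
      simp
    rw [h1, mul_zero, zero_sub]
    unfold cc
    rw [show p - (p - 1) = 1 by omega]
    rw [ZMod.wilsons_lemma]
    rw [ZMod.pow_card_sub_one_eq_one hx]
    simp
  · -- j + 1 < p
    have hj2 : j + 1 < p := hj1
    unfold cc
    rw [show p - j = (p - 1 - j) + 1 by omega, Finset.sum_range_succ]
    have hfacts : ((Nat.factorial (j + 1) : ZMod p))⁻¹ * (((j + 1 : ℕ)) : ZMod p)
        = ((Nat.factorial j : ZMod p))⁻¹ := by
      have h1 : (((j + 1 : ℕ)) : ZMod p) ≠ 0 := cast_ne_zero' (by omega) hj2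
      push_cast at h1
      rw [Nat.factorial_succ]
      push_cast
      rw [mul_inv, mul_comm, ← mul_assoc, mul_inv_cancel₀ h1, one_mul]
    have hshift : p - (j + 1) = p - 1 - j := by omega
    rw [hshift]
    -- remaining term computation
    have hterm : x * (x ^ j * ((Nat.factorial j : ZMod p))⁻¹
        * ((-x) ^ (p - 1 - j) * ((Nat.factorial (p - 1 - j) : ZMod p))⁻¹)) = -x := by
      have hbin : ((Nat.factorial j : ZMod p))⁻¹ * ((Nat.factorial (p - 1 - j) : ZMod p))⁻¹
          = ((p - 1).choose j : ZMod p) * ((Nat.factorial (p - 1) : ZMod p))⁻¹ := by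
        exact inv_fact_mul (by omega) (by omega)
      have hneg : (-x) ^ (p - 1 - j) = (-1) ^ (p - 1 - j) * x ^ (p - 1 - j) := by
        rw [neg_pow]
      have hxp : x * (x ^ j * x ^ (p - 1 - j)) = x := by
        rw [← pow_add, show j + (p - 1 - j) = p - 1 by omega,
          ZMod.pow_card_sub_one_eq_one hx, mul_one]
      have hchoose := choose_p1 (p := p) j (by omega)
      have hw : ((Nat.factorial (p - 1) : ZMod p))⁻¹ = -1 := by
        rw [ZMod.wilsons_lemma, inv_neg, inv_one]
      have hsign : ((-1 : ZMod p)) ^ (p - 1 - j) * (-1) ^ j = 1 := by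
        rw [← pow_add, show p - 1 - j + j = p - 1 by omega]
        have : Even (p - 1) := by
          have := hp.out.two_le
          rcases Nat.even_or_odd p with he | ho
          · exfalso
            exact hp2 ((Nat.Prime.even_iff hp.out).mp he)
          · exact Nat.Odd.sub_odd ho odd_one
        exact this.neg_one_pow
      calc x * (x ^ j * ((Nat.factorial j : ZMod p))⁻¹
            * ((-x) ^ (p - 1 - j) * ((Nat.factorial (p - 1 - j) : ZMod p))⁻¹))
          = (x * (x ^ j * x ^ (p - 1 - j))) * ((-1) ^ (p - 1 - j))
            * (((Nat.factorial j : ZMod p))⁻¹ * ((Nat.factorial (p - 1 - j) : ZMod p))⁻¹) := by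
            rw [hneg]; ring
        _ = x * ((-1) ^ (p - 1 - j)) * (((p - 1).choose j : ZMod p)
            * ((Nat.factorial (p - 1) : ZMod p))⁻¹) := by rw [hbin, hxp]
        _ = x * ((-1) ^ (p - 1 - j)) * ((-1) ^ j * (-1)) := by rw [hchoose, hw]
        _ = -(x * (((-1 : ZMod p)) ^ (p - 1 - j) * (-1) ^ j)) := by ring
        _ = -x := by rw [hsign]; ring
    calc x * (x ^ j * (↑(Nat.factorial j))⁻¹
          * (∑ i ∈ range (p - 1 - j), (-x) ^ i * (↑(Nat.factorial i))⁻¹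
            + (-x) ^ (p - 1 - j) * (↑(Nat.factorial (p - 1 - j)))⁻¹))
        = (x * x ^ j * (↑(Nat.factorial j))⁻¹)
            * (∑ i ∈ range (p - 1 - j), (-x) ^ i * (↑(Nat.factorial i))⁻¹)
          + x * (x ^ j * (↑(Nat.factorial j))⁻¹
            * ((-x) ^ (p - 1 - j) * (↑(Nat.factorial (p - 1 - j)))⁻¹)) := by ring
      _ = (x ^ (j + 1) * ((↑(Nat.factorial (j + 1)))⁻¹ * ↑(j + 1)))
            * (∑ i ∈ range (p - 1 - j), (-x) ^ i * (↑(Nat.factorial i))⁻¹) + -x := by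
          rw [hterm, hfacts]
          ring
      _ = ↑(j + 1) * (x ^ (j + 1) * (↑(Nat.factorial (j + 1)))⁻¹
            * ∑ i ∈ range (p - 1 - j), (-x) ^ i * (↑(Nat.factorial i))⁻¹) - x := by
          push_cast
          ring

theorem sum_range_cast (f : ZMod p → ZMod p) :
    ∑ j ∈ range p, f ((j : ZMod p)) = ∑ a : ZMod p, f a := by
  haveI : NeZero p := ⟨hp.out.pos.ne'⟩
  refine Finset.sum_nbij' (fun j => ((j : ZMod p))) (fun a => a.val) ?_ ?_ ?_ ?_ ?_
  · intro a _
    exact mem_univ _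
  · intro a _
    exact mem_range.mpr (ZMod.val_lt a)
  · intro a ha
    exact ZMod.val_cast_of_lt (mem_range.mp ha)
  · intro a _
    exact ZMod.natCast_rightInverse a
  · intro j hj
    rfl

theorem touchard_succ_eval (x : ZMod p) (n : ℕ) :
    (aeval x (touchard (n + 1)) : ZMod p)
      = x * ∑ k ∈ range (n + 1), (n.choose k : ZMod p) * aeval x (touchard k) := by
  rw [touchard]
  rw [map_mul, aeval_X, map_sum]
  congr 1
  rw [← Finset.sum_attach (range (n + 1))
    (fun k => (n.choose k : ZMod p) * aeval x (touchard k))]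
  apply Finset.sum_congr rfl
  intro k _
  rw [map_mul]
  congr 1
  simp

theorem main_A (hp2 : p ≠ 2) (x : ZMod p) (hx : x ≠ 0) :
    ∀ n, n ≤ p - 1 →
      (aeval x (touchard n) : ZMod p) = ∑ j ∈ range p, cc p x j * ((j : ZMod p)) ^ n := by
  intro n
  induction n using Nat.strong_induction_on with
  | _ n ih =>
    match n with
    | 0 =>
      intro _
      rw [touchard, map_one]
      simp only [pow_zero, mul_one]
      exact (sum_cc x).symm
    | (n + 1) =>
      intro hn
      rw [touchard_succ_eval]
      have hk1 : ∀ k ∈ range (n + 1), (n.choose k : ZMod p) * aeval x (touchard k)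
          = (n.choose k : ZMod p) * ∑ j ∈ range p, cc p x j * ((j : ZMod p)) ^ k := by
        intro k hk
        have hklt := Finset.mem_range.mp hk
        rw [ih k hklt (by omega)]
      rw [Finset.sum_congr rfl hk1]
      have hswap : ∑ k ∈ range (n + 1), (n.choose k : ZMod p)
            * ∑ j ∈ range p, cc p x j * ((j : ZMod p)) ^ k
          = ∑ j ∈ range p, cc p x j * (((j : ZMod p)) + 1) ^ n := by
        calc ∑ k ∈ range (n + 1), (n.choose k : ZMod p)
              * ∑ j ∈ range p, cc p x j * ((j : ZMod p)) ^ k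
            = ∑ k ∈ range (n + 1), ∑ j ∈ range p,
                cc p x j * (((j : ZMod p)) ^ k * (1 : ZMod p) ^ (n - k)
                  * (n.choose k : ZMod p)) := by
              apply Finset.sum_congr rfl
              intro k _
              rw [Finset.mul_sum]
              apply Finset.sum_congr rfl
              intro j _
              rw [one_pow]
              ring
          _ = ∑ j ∈ range p, ∑ k ∈ range (n + 1),
                cc p x j * (((j : ZMod p)) ^ k * (1 : ZMod p) ^ (n - k)
                  * (n.choose k : ZMod p)) := Finset.sum_comm
          _ = ∑ j ∈ range p, cc p x j * (((j : ZMod p)) + 1) ^ n := by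
              apply Finset.sum_congr rfl
              intro j _
              rw [← Finset.mul_sum, add_pow]
      rw [hswap, Finset.mul_sum]
      have hkey : ∀ j ∈ range p, x * (cc p x j * (((j : ZMod p)) + 1) ^ n)
          = ((j : ZMod p) + 1) * cc p x (j + 1) * (((j : ZMod p)) + 1) ^ n
            - x * (((j : ZMod p)) + 1) ^ n := by
        intro j hj
        have h := key_cc hp2 x hx (mem_range.mp hj)
        have hc : (((j + 1 : ℕ)) : ZMod p) = (j : ZMod p) + 1 := by push_cast; ring
        rw [hc] at h
        calc x * (cc p x j * (((j : ZMod p)) + 1) ^ n)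
            = (x * cc p x j) * (((j : ZMod p)) + 1) ^ n := by ring
          _ = (((j : ZMod p) + 1) * cc p x (j + 1) - x) * (((j : ZMod p)) + 1) ^ n := by
              rw [h]
          _ = _ := by ring
      rw [Finset.sum_congr rfl hkey, Finset.sum_sub_distrib]
      have hzero : ∑ j ∈ range p, x * (((j : ZMod p)) + 1) ^ n = 0 := by
        rw [← Finset.mul_sum]
        have h0 : ∑ j ∈ range p, (((j : ZMod p)) + 1) ^ n = ∑ a : ZMod p, a ^ n := by
          have e1 : ∀ j ∈ range p, (((j : ZMod p)) + 1) ^ n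
              = (fun m : ℕ => ((m : ZMod p)) ^ n) (j + 1) := by
            intro j _
            push_cast
            ring
          rw [Finset.sum_congr rfl e1]
          have e2 := Finset.sum_range_succ' (fun m : ℕ => ((m : ZMod p)) ^ n) p
          have e3 := Finset.sum_range_succ (fun m : ℕ => ((m : ZMod p)) ^ n) p
          have e4 : (((p : ℕ)) : ZMod p) ^ n = (((0 : ℕ)) : ZMod p) ^ n := by
            rw [ZMod.natCast_self, Nat.cast_zero]
          have e5 : ∑ j ∈ range p, (fun m : ℕ => ((m : ZMod p)) ^ n) (j + 1)
              = ∑ m ∈ range p, ((m : ZMod p)) ^ n := by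
            have h6 := e2.symm.trans e3
            simp only [] at h6 e4 ⊢
            linear_combination h6 + e4
          rw [e5, sum_range_cast (fun a => a ^ n)]
        rw [h0, FiniteField.sum_pow_lt_card_sub_one (ZMod p) n
          (by rw [ZMod.card]; omega), mul_zero]
      have hfirst : ∑ j ∈ range p, ((j : ZMod p) + 1) * cc p x (j + 1) * (((j : ZMod p)) + 1) ^ n
          = ∑ j ∈ range p, cc p x j * ((j : ZMod p)) ^ (n + 1) := by
        have e1 : ∀ j ∈ range p, ((j : ZMod p) + 1) * cc p x (j + 1) * (((j : ZMod p)) + 1) ^ n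
            = (fun m : ℕ => cc p x m * ((m : ZMod p)) ^ (n + 1)) (j + 1) := by
          intro j _
          simp only []
          push_cast
          ring
        rw [Finset.sum_congr rfl e1]
        have e2 := Finset.sum_range_succ' (fun m : ℕ => cc p x m * ((m : ZMod p)) ^ (n + 1)) p
        have e3 := Finset.sum_range_succ (fun m : ℕ => cc p x m * ((m : ZMod p)) ^ (n + 1)) p
        have f0 : cc p x 0 * (((0 : ℕ)) : ZMod p) ^ (n + 1) = 0 := by
          rw [Nat.cast_zero, zero_pow (Nat.succ_ne_zero n), mul_zero]
        have fp : cc p x p * (((p : ℕ)) : ZMod p) ^ (n + 1) = 0 := by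
          rw [ZMod.natCast_self, zero_pow (Nat.succ_ne_zero n), mul_zero]
        have h6 := e2.symm.trans e3
        simp only [] at h6 f0 fp ⊢
        linear_combination h6 + fp - f0
      rw [hzero, hfirst, sub_zero]
end

instance fact5aux : Fact (Nat.Prime 5) := ⟨by norm_num⟩

theorem final3 (x : ZMod 3) (hx : x ≠ 0) :
    - cc 3 x ((-4 : ZMod 3)).val = (x ^ 3 - 3 * x ^ 2 + 6 * x - 6) / x ^ 3 := by
  have h2inv : (2 : ZMod 3)⁻¹ = 2 :=
    (eq_inv_of_mul_eq_one_left (show (2 : ZMod 3) * 2 = 1 by decide)).symm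
  have hval : ((-4 : ZMod 3)).val = 2 := by decide
  have hcases : ∀ z : ZMod 3, z ≠ 0 → z = 1 ∨ z = 2 := by decide
  rw [eq_div_iff (pow_ne_zero 3 hx), hval]
  rcases hcases x hx with rfl | rfl <;>
    simp [cc, Finset.sum_range_succ, Nat.factorial, h2inv] <;> decide

theorem final5 (x : ZMod 5) (hx : x ≠ 0) :
    - cc 5 x ((-4 : ZMod 5)).val = (x ^ 3 - 3 * x ^ 2 + 6 * x - 6) / x ^ 3 := by
  have h2inv : (2 : ZMod 5)⁻¹ = 3 :=
    (eq_inv_of_mul_eq_one_left (show (3 : ZMod 5) * 2 = 1 by decide)).symm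
  have h3inv : (3 : ZMod 5)⁻¹ = 2 :=
    (eq_inv_of_mul_eq_one_left (show (2 : ZMod 5) * 3 = 1 by decide)).symm
  have h6inv : (6 : ZMod 5)⁻¹ = 1 := by rw [show (6 : ZMod 5) = 1 by decide, inv_one]
  have hval : ((-4 : ZMod 5)).val = 1 := by decide
  have hcases : ∀ z : ZMod 5, z ≠ 0 → z = 1 ∨ z = 2 ∨ z = 3 ∨ z = 4 := by decide
  rw [eq_div_iff (pow_ne_zero 3 hx), hval]
  rcases hcases x hx with rfl | rfl | rfl | rfl <;>
    simp [cc, Finset.sum_range_succ, Nat.factorial, h2inv, h3inv, h6inv] <;> decide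

section
variable {p : ℕ} [hp : Fact p.Prime]

theorem final_eval (hp2 : p ≠ 2) (x : ZMod p) (hx : x ≠ 0) :
    - cc p x ((-4 : ZMod p)).val = (x ^ 3 - 3 * x ^ 2 + 6 * x - 6) / x ^ 3 := by
  have hple := hp.out.two_le
  have hcases : p = 3 ∨ p = 5 ∨ 7 ≤ p := by
    by_cases h7 : 7 ≤ p
    · right; right; exact h7
    · have h6 : p ≤ 6 := by omega
      interval_cases p
      · exact absurd rfl hp2
      · left; rfl
      · exact absurd hp.out (by norm_num)
      · right; left; rfl
      · exact absurd hp.out (by norm_num)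
  rcases hcases with h | h | h7
  · subst h; exact final3 x hx
  · subst h; exact final5 x hx
  · -- p ≥ 7
    have hval : ((-4 : ZMod p)).val = p - 4 := by
      have hcast : (((p - 4 : ℕ)) : ZMod p) = -4 := by
        rw [Nat.cast_sub (show 4 ≤ p by omega), ZMod.natCast_self]
        push_cast
        ring
      rw [← hcast, ZMod.val_cast_of_lt (by omega)]
    rw [hval]
    unfold cc
    rw [show p - (p - 4) = 4 by omega]
    have hxp4 : x ^ (p - 4) = (x ^ 3)⁻¹ := by
      have h1 : x ^ (p - 4) * x ^ 3 = 1 := by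
        rw [← pow_add, show p - 4 + 3 = p - 1 by omega, ZMod.pow_card_sub_one_eq_one hx]
      exact eq_inv_of_mul_eq_one_left h1
    have hfact : ((Nat.factorial (p - 4) : ZMod p))⁻¹ = 6 := by
      have hstep : Nat.factorial (p - 1)
          = (p - 1) * ((p - 2) * ((p - 3) * Nat.factorial (p - 4))) := by
        have e1 : p - 1 = (p - 2) + 1 := by omega
        have e2 : p - 2 = (p - 3) + 1 := by omega
        have e3 : p - 3 = (p - 4) + 1 := by omega
        rw [e1, Nat.factorial_succ, e2, Nat.factorial_succ, e3, Nat.factorial_succ]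
      have hW := ZMod.wilsons_lemma p
      rw [hstep] at hW
      push_cast at hW
      have c1 : (((p - 1 : ℕ)) : ZMod p) = -1 := by
        rw [Nat.cast_sub (show 1 ≤ p by omega), ZMod.natCast_self]; push_cast; ring
      have c2 : (((p - 2 : ℕ)) : ZMod p) = -2 := by
        rw [Nat.cast_sub (show 2 ≤ p by omega), ZMod.natCast_self]; push_cast; ring
      have c3 : (((p - 3 : ℕ)) : ZMod p) = -3 := by
        rw [Nat.cast_sub (show 3 ≤ p by omega), ZMod.natCast_self]; push_cast; ring
      rw [c1, c2, c3] at hW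
      have hF : ((Nat.factorial (p - 4) : ZMod p)) * 6 = 1 := by linear_combination -hW
      exact inv_eq_of_mul_eq_one_right hF
    rw [hxp4, hfact]
    rw [Finset.sum_range_succ, Finset.sum_range_succ, Finset.sum_range_succ,
      Finset.sum_range_succ, Finset.sum_range_zero]
    have hf0 : ((Nat.factorial 0 : ZMod p)) = 1 := by norm_num
    have hf1 : ((Nat.factorial 1 : ZMod p)) = 1 := by norm_num
    have hf2 : ((Nat.factorial 2 : ZMod p)) = 2 := by norm_num [Nat.factorial]
    have hf3 : ((Nat.factorial 3 : ZMod p)) = 6 := by norm_num [Nat.factorial]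
    rw [hf0, hf1, hf2, hf3]
    have h2 : (2 : ZMod p) ≠ 0 := by
      have := cast_ne_zero' (p := p) (show 0 < 2 by norm_num) (by omega)
      exact_mod_cast this
    have h6 : (6 : ZMod p) ≠ 0 := by
      have := cast_ne_zero' (p := p) (show 0 < 6 by norm_num) (by omega)
      exact_mod_cast this
    have hx3 : x ^ 3 ≠ 0 := pow_ne_zero 3 hx
    field_simp
    ring
end

theorem touchard_sum_m_four (p : ℕ) [hp : Fact p.Prime] (hp2 : p ≠ 2)
    (x : ZMod p) (hx : x ≠ 0) :
    ∑ n ∈ Finset.Icc 1 (p - 1), (aeval x (touchard n)) * ((-4 : ZMod p)⁻¹) ^ n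
      = (x ^ 3 - 3 * x ^ 2 + 6 * x - 6) / x ^ 3 := by
  haveI : NeZero p := ⟨hp.out.pos.ne'⟩
  have hple := hp.out.two_le
  have h4 : (-4 : ZMod p) ≠ 0 := by
    intro h
    have h4' : ((4 : ℕ) : ZMod p) = 0 := by
      have h0 := neg_eq_zero.mp h
      exact_mod_cast h0
    rw [ZMod.natCast_eq_zero_iff] at h4'
    have hle := Nat.le_of_dvd (by norm_num) h4'
    interval_cases p
    · exact absurd rfl hp2
    · revert h4'; norm_num
    · exact absurd hp.out (by norm_num)
  have h1 : ∀ n ∈ Finset.Icc 1 (p - 1), (aeval x (touchard n)) * ((-4 : ZMod p)⁻¹) ^ n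
      = ∑ j ∈ range p, cc p x j * (((j : ZMod p)) * (-4 : ZMod p)⁻¹) ^ n := by
    intro n hn
    rw [mem_Icc] at hn
    rw [main_A hp2 x hx n hn.2, Finset.sum_mul]
    apply Finset.sum_congr rfl
    intro j _
    rw [mul_pow]
    ring
  rw [Finset.sum_congr rfl h1, Finset.sum_comm]
  have hIcc : Finset.Icc 1 (p - 1) = Finset.Ico 1 p := by
    rw [← Finset.Ico_add_one_right_eq_Icc, show p - 1 + 1 = p by omega]
  have geom : ∀ r : ZMod p, ∑ n ∈ Finset.Icc 1 (p - 1), r ^ n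
      = (∑ n ∈ range p, r ^ n) - 1 := by
    intro r
    rw [hIcc]
    have h := Finset.sum_eq_sum_Ico_succ_bot (show 0 < p by omega) (fun n => r ^ n)
    rw [Finset.range_eq_Ico, h, pow_zero]
    ring
  have hG : ∀ j ∈ range p, ∑ n ∈ Finset.Icc 1 (p - 1),
        cc p x j * (((j : ZMod p)) * (-4 : ZMod p)⁻¹) ^ n
      = cc p x j * ((∑ n ∈ range p, (((j : ZMod p)) * (-4 : ZMod p)⁻¹) ^ n) - 1) := by
    intro j _
    rw [← Finset.mul_sum, geom]
  rw [Finset.sum_congr rfl hG]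
  have hj0mem : ((-4 : ZMod p)).val ∈ range p := mem_range.mpr (ZMod.val_lt _)
  have hj0cast : ((((-4 : ZMod p)).val : ℕ) : ZMod p) = -4 := ZMod.natCast_rightInverse _
  have hmain : ∑ j ∈ range p, cc p x j
        * ((∑ n ∈ range p, (((j : ZMod p)) * (-4 : ZMod p)⁻¹) ^ n) - 1)
      = - cc p x ((-4 : ZMod p)).val := by
    rw [Finset.sum_eq_single ((-4 : ZMod p)).val]
    · rw [hj0cast, mul_inv_cancel₀ h4]
      simp only [one_pow]
      rw [Finset.sum_const, Finset.card_range]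
      simp [ZMod.natCast_self]
    · intro j hj hne
      have hr1 : ((j : ZMod p)) * (-4 : ZMod p)⁻¹ ≠ 1 := by
        intro h
        have hj4 : ((j : ZMod p)) = -4 := by
          have h2 := congrArg (fun z => z * (-4 : ZMod p)) h
          rw [mul_assoc, inv_mul_cancel₀ h4, mul_one, one_mul] at h2
          exact h2
        apply hne
        have hv := congrArg ZMod.val hj4
        rw [ZMod.val_cast_of_lt (mem_range.mp hj)] at hv
        exact hv
      have hsum : ∑ n ∈ range p, (((j : ZMod p)) * (-4 : ZMod p)⁻¹) ^ n = 1 := by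
        rw [geom_sum_eq hr1, ZMod.pow_card]
        apply div_self
        intro h
        exact hr1 (by linear_combination h)
      rw [hsum, sub_self, mul_zero]
    · intro h
      exact absurd hj0mem h
  rw [hmain]
  exact final_eval hp2 x hx
end

section
/- Let p be a prime, m a positive integer not divisible by p, and let r with 1 ≤ r ≤ p-1 be the least positive residue of -m modulo p (so p divides m + r). Then for every integer l with m + r - p ≤ l and l < m (and l ≥ 0), one has r! · (p + l - m - r)! · ((m-1)!/l!) ≡ (-1)^(r+1) (mod p), where (m-1)!/l! denotes the integer ∏_{s=l+1}^{m-1} s. -/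
lemma aux_wilson (p : ℕ) (hp : p.Prime) (k : ℕ) (hk : k ≤ p - 1) :
    ((k.factorial * (p - 1 - k).factorial : ℕ) : ZMod p) = (-1) ^ (k + 1) := by
  haveI := Fact.mk hp
  induction k with
  | zero => simpa using ZMod.wilsons_lemma p
  | succ k ih =>
    have hk' : k ≤ p - 1 := by omega
    have ihh := ih hk'
    have h1 : p - 1 - k = (p - 1 - (k + 1)) + 1 := by omega
    have h2 : ((p - 1 - k : ℕ) : ZMod p) = -((k : ZMod p) + 1) := by
      have hpeq : ((p - 1 - k) + (k + 1) : ℕ) = p := by omega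
      have := congrArg (Nat.cast : ℕ → ZMod p) hpeq
      push_cast at this
      rw [ZMod.natCast_self] at this
      linear_combination this
    rw [h1] at h2
    rw [h1, Nat.factorial_succ] at ihh
    rw [Nat.factorial_succ]
    push_cast at ihh h2 ⊢
    rw [h2] at ihh
    linear_combination -ihh

lemma aux_neg_one_pow (p : ℕ) (hp : p.Prime) : ((-1 : ZMod p)) ^ p = -1 := by
  rcases hp.eq_two_or_odd' with h2 | hodd
  · subst h2; decide
  · exact hodd.neg_one_pow

/-- Key congruence in the proof of Theorem 2: if `r` is the least positive residue of
`-m` modulo `p`, then for `m + r - p ≤ l < m` one has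
`r! * (p + l - m - r)! * ((m-1)!/l!) ≡ (-1)^(r+1) (mod p)`, where `(m-1)!/l!` is the
integer `∏_{s=l+1}^{m-1} s`. -/
theorem factorial_quotient_congruence (p : ℕ) (hp : p.Prime)
    (m : ℕ) (hm : 0 < m) (hpm : ¬ p ∣ m)
    (r : ℕ) (hr1 : 1 ≤ r) (hr2 : r ≤ p - 1) (hpr : p ∣ m + r)
    (l : ℕ) (hl1 : m + r - p ≤ l) (hl2 : l < m) :
    ((r.factorial * (p + l - m - r).factorial *
        ∏ s ∈ Finset.Icc (l + 1) (m - 1), s : ℕ) : ZMod p)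
      = (-1) ^ (r + 1) := by
  haveI := Fact.mk hp
  have hp2 : 2 ≤ p := hp.two_le
  have hmrp : p ≤ m + r := Nat.le_of_dvd (by omega) hpr
  set k := p + l - m - r with hkdef
  have hk : k + (m + r) = p + l := by omega
  have hkr : k + r + 1 ≤ p := by omega
  have hmr0 : ((m + r : ℕ) : ZMod p) = 0 := (ZMod.natCast_eq_zero_iff _ _).mpr hpr
  have key : (∏ s ∈ Finset.Icc (l + 1) (m - 1), (s : ZMod p))
      = ∏ j ∈ Finset.Icc (r + 1) (p - k - 1), (-(j : ZMod p)) := by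
    refine Finset.prod_bij' (fun s _ => m + r - s) (fun j _ => m + r - j) ?_ ?_ ?_ ?_ ?_
    · intro a ha; simp only [Finset.mem_Icc] at ha ⊢; omega
    · intro a ha; simp only [Finset.mem_Icc] at ha ⊢; omega
    · intro a ha; simp only [Finset.mem_Icc] at ha
      show m + r - (m + r - a) = a; omega
    · intro a ha; simp only [Finset.mem_Icc] at ha
      show m + r - (m + r - a) = a; omega
    · intro a ha
      simp only [Finset.mem_Icc] at ha
      show (a : ZMod p) = -((m + r - a : ℕ) : ZMod p)
      have h1 : ((a + (m + r - a) : ℕ) : ZMod p) = 0 := by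
        rw [(by omega : a + (m + r - a) = m + r)]; exact hmr0
      push_cast at h1
      linear_combination h1
  have card_eq : (Finset.Icc (r + 1) (p - k - 1)).card = p - k - 1 - r := by
    rw [Nat.card_Icc]; omega
  have hB : (∏ j ∈ Finset.Icc (r + 1) (p - k - 1), (-(j : ZMod p)))
      = (-1) ^ (p - k - 1 - r) * ∏ j ∈ Finset.Icc (r + 1) (p - k - 1), (j : ZMod p) := by
    have h2 : ∀ j ∈ Finset.Icc (r + 1) (p - k - 1), (-(j : ZMod p)) = (-1) * j :=
      fun j _ => by ring
    rw [Finset.prod_congr rfl h2, Finset.prod_mul_distrib, Finset.prod_const, card_eq]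
  have hC : r.factorial * ∏ j ∈ Finset.Icc (r + 1) (p - k - 1), j
      = (p - k - 1).factorial := by
    have h1 : Finset.Icc (r + 1) (p - k - 1) = Finset.Ico (r + 1) (p - k - 1 + 1) := by
      rw [Finset.Ico_add_one_right_eq_Icc]
    rw [h1, ← Finset.prod_Ico_id_eq_factorial r, ← Finset.prod_Ico_id_eq_factorial (p - k - 1)]
    exact Finset.prod_Ico_consecutive _ (by omega) (by omega)
  have hD := aux_wilson p hp k (by omega)
  rw [(by omega : p - 1 - k = p - k - 1)] at hD
  have hC' := congrArg (Nat.cast : ℕ → ZMod p) hC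
  push_cast at hC' hD ⊢
  rw [key, hB]
  have step : ((r.factorial : ZMod p) * (k.factorial : ZMod p) *
      ((-1) ^ (p - k - 1 - r) * ∏ j ∈ Finset.Icc (r + 1) (p - k - 1), (j : ZMod p)))
      = (-1) ^ (p - k - 1 - r) * ((k.factorial : ZMod p) * ((p - k - 1).factorial : ZMod p)) := by
    rw [← hC']; ring
  rw [step, hD, ← pow_add, (by omega : p - k - 1 - r + (k + 1) = p - r)]
  have hneg : ((-1 : ZMod p)) ^ p = -1 := aux_neg_one_pow p hp
  have h3 : ((-1 : ZMod p)) ^ (p - r) * (-1) ^ r = -1 := by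
    rw [← pow_add, (by omega : p - r + r = p), hneg]
  have h4 : ((-1 : ZMod p)) ^ r * (-1) ^ r = 1 := by
    rw [← pow_add, ← two_mul, pow_mul]; norm_num
  calc ((-1 : ZMod p)) ^ (p - r) = (-1) ^ (p - r) * ((-1) ^ r * (-1) ^ r) := by
        rw [h4, mul_one]
    _ = ((-1) ^ (p - r) * (-1) ^ r) * (-1) ^ r := by ring
    _ = -1 * (-1) ^ r := by rw [h3]
    _ = (-1) ^ (r + 1) := by rw [pow_succ]; ring
end
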